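/- Let (Ω, μ), (Ω′, μ′), (M, ν) be σ-finite measure spaces, let f be a probability density on Ω × Ω′ (with the product measure μ × μ′), let p : Ω → M be measurable, and define p̄ : Ω × Ω′ → M × Ω′ by p̄(x,y) = (p(x), y). Assume the pushforward p̄_#(f d(μ×μ′)) is absolutely continuous with respect to ν × μ′, with density f_{(p̄)}. Set f_Y(y) := ∫_Ω f(x,y) dμ(x). Then for μ′-almost every y with 0 < f_Y(y) < ∞, the pushforward p_#(f(·|y) dμ) of the conditional density f(x|y) := f(x,y)/f_Y(y) is absolutely continuous with respect to ν, with density z ↦ f_{(p̄)}(z,y)/f_Y(y); in particular ∫_M f_{(p̄)}(z,y) dν(z) = f_Y(y) for μ′-almost every such y. -/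

import Mathlib

open MeasureTheory MeasurableSpace Set Filter Topology ENNReal

section Aux

variable {α β γ : Type*}

private lemma prod_mono_left {m m' : MeasurableSpace α} (mβ : MeasurableSpace β) (h : m ≤ m') :
    m.prod mβ ≤ m'.prod mβ :=
  sup_le_sup_right (MeasurableSpace.comap_mono h) _



variable {α β : Type*}


theorem exists_ctblyGen_prod_measurable
    [mα : MeasurableSpace α] [mβ : MeasurableSpace β]
    (g : α × β → ℝ) (hg : Measurable g) :
    ∃ b : Set (Set α), b.Countable ∧ generateFrom b ≤ mα ∧
      @Measurable _ _ ((generateFrom b).prod mβ) _ g := by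
  set P : Set (α × β) → Prop := fun S =>
    ∃ b : Set (Set α), b.Countable ∧ generateFrom b ≤ mα ∧
      MeasurableSet[(generateFrom b).prod mβ] S with hPdef
  have hPle : ∀ S, MeasurableSet[mα.prod mβ] S → P S := by
    have h0 : P ∅ :=
      ⟨∅, countable_empty, generateFrom_le (by simp),
        @MeasurableSet.empty _ ((generateFrom (∅ : Set (Set α))).prod mβ)⟩
    let m' : MeasurableSpace (α × β) :=
      { MeasurableSet' := P
        measurableSet_empty := h0
        measurableSet_compl := by
          rintro s ⟨b, hb, hble, hs⟩; exact ⟨b, hb, hble, hs.compl⟩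
        measurableSet_iUnion := by
          intro s hs
          choose b hb hble hsb using hs
          refine ⟨⋃ n, b n, countable_iUnion hb, ?_, ?_⟩
          · refine generateFrom_le fun t ht => ?_
            obtain ⟨n, hn⟩ := mem_iUnion.mp ht
            exact hble n _ (measurableSet_generateFrom hn)
          · exact MeasurableSet.iUnion fun n =>
              (prod_mono_left mβ (generateFrom_mono (subset_iUnion b n))) _ (hsb n) }
    have hle : mα.prod mβ ≤ m' := by
      refine sup_le ?_ ?_
      · rintro S ⟨A, hA, rfl⟩
        refine ⟨{A}, countable_singleton A, generateFrom_le (by simpa using hA), ?_⟩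
        exact @measurable_fst _ _ (generateFrom {A}) mβ _
          (measurableSet_generateFrom rfl)
      · rintro S ⟨B, hB, rfl⟩
        exact ⟨∅, countable_empty, generateFrom_le (by simp),
          @measurable_snd _ _ (generateFrom (∅ : Set (Set α))) mβ _ hB⟩
    exact fun S hS => hle S hS
  have hq : ∀ q : ℚ, P (g ⁻¹' Iio (q : ℝ)) := fun q => hPle _ (hg measurableSet_Iio)
  choose b hb hble hgb using hq
  refine ⟨⋃ q, b q, countable_iUnion hb, ?_, ?_⟩
  · refine generateFrom_le fun t ht => ?_
    obtain ⟨q, hqt⟩ := mem_iUnion.mp ht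
    exact hble q _ (measurableSet_generateFrom hqt)
  · letI mP : MeasurableSpace (α × β) := (generateFrom (⋃ q, b q)).prod mβ
    refine measurable_of_Iio (mδ := mP) fun x => ?_
    have : g ⁻¹' Iio x = ⋃ q : ℚ, ⋃ _ : (q : ℝ) < x, g ⁻¹' Iio (q : ℝ) := by
      ext z
      simp only [mem_preimage, mem_Iio, mem_iUnion]
      exact ⟨fun h => by
        obtain ⟨q, h1, h2⟩ := exists_rat_btwn h
        exact ⟨q, h2, h1⟩, fun ⟨q, h1, h2⟩ => lt_trans h2 h1⟩
    rw [this]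
    exact MeasurableSet.iUnion fun q => MeasurableSet.iUnion fun hqx =>
      (prod_mono_left mβ (generateFrom_mono (subset_iUnion b q))) _ (hgb q)


theorem generateFrom_eq_piSystem {δ : Type*} (b : Set (Set δ)) (e : ℕ → Set δ)
    (he : insert Set.univ b = Set.range e) :
    MeasurableSpace.generateFrom b =
      MeasurableSpace.generateFrom (Set.range fun t : Finset ℕ => ⋂ i ∈ t, e i) := by
  apply le_antisymm
  · refine MeasurableSpace.generateFrom_le fun s hs => ?_
    have hmem : s ∈ Set.range e := by rw [← he]; exact Set.mem_insert_of_mem _ hs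
    obtain ⟨i, rfl⟩ := hmem
    have h2 : e i = ⋂ j ∈ ({i} : Finset ℕ), e j := by simp
    rw [h2]
    exact measurableSet_generateFrom ⟨{i}, rfl⟩
  · refine MeasurableSpace.generateFrom_le ?_
    rintro _ ⟨t, rfl⟩
    letI : MeasurableSpace δ := MeasurableSpace.generateFrom b
    refine Finset.measurableSet_biInter t fun i _ => ?_
    have hmem : e i ∈ insert Set.univ b := by rw [he]; exact Set.mem_range_self i
    rcases Set.mem_insert_iff.mp hmem with h | h
    · rw [h]; exact MeasurableSet.univ
    · exact measurableSet_generateFrom h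

variable {γ : Type*}


theorem set_conv {𝒜 : MeasurableSpace γ} [mγ : MeasurableSpace γ] (h𝒜 : 𝒜 ≤ mγ)
    (e : ℕ → Set γ) (hgen : 𝒜 = MeasurableSpace.generateFrom
      (Set.range fun t : Finset ℕ => ⋂ i ∈ t, e i))
    (κ : Measure γ) [IsFiniteMeasure κ]
    (s : ℕ → Set γ) (S : Set γ) (hs : ∀ j, MeasurableSet (s j)) (hS : MeasurableSet S)
    (hconv : ∀ t : Finset ℕ,
      Tendsto (fun j => κ (s j ∩ ⋂ i ∈ t, e i)) atTop (𝓝 (κ (S ∩ ⋂ i ∈ t, e i)))) :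
    ∀ B, MeasurableSet[𝒜] B →
      Tendsto (fun j => κ (s j ∩ B)) atTop (𝓝 (κ (S ∩ B))) := by
  have huniv : Tendsto (fun j => κ (s j)) atTop (𝓝 (κ S)) := by simpa using hconv ∅
  have hpi : IsPiSystem (Set.range fun t : Finset ℕ => ⋂ i ∈ t, e i) := by
    rintro _ ⟨t₁, rfl⟩ _ ⟨t₂, rfl⟩ -
    refine ⟨t₁ ∪ t₂, ?_⟩
    ext x
    simp only [Set.mem_iInter, Finset.mem_union, Set.mem_inter_iff]
    exact ⟨fun h => ⟨fun i hi => h i (Or.inl hi), fun i hi => h i (Or.inr hi)⟩,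
      fun h i hi => hi.elim (h.1 i) (h.2 i)⟩
  have hdiff : ∀ (T : Set γ), MeasurableSet T → ∀ t, MeasurableSet t →
      κ (T ∩ tᶜ) = κ T - κ (T ∩ t) := by
    intro T hT t ht
    have h1 : T ∩ tᶜ = T \ (T ∩ t) := by rw [Set.diff_self_inter, Set.diff_eq]
    rw [h1]
    exact measure_diff inter_subset_left (hT.inter ht).nullMeasurableSet (measure_ne_top κ _)
  refine MeasurableSpace.induction_on_inter (m := 𝒜)
    (C := fun B _ => Tendsto (fun j => κ (s j ∩ B)) atTop (𝓝 (κ (S ∩ B))))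
    hgen hpi ?_ ?_ ?_ ?_
  · simpa using tendsto_const_nhds
  · rintro _ ⟨t', rfl⟩; exact hconv t'
  · intro t htm iht
    have htm' : MeasurableSet t := h𝒜 _ htm
    have h2 : (fun j => κ (s j ∩ tᶜ)) = fun j => κ (s j) - κ (s j ∩ t) := by
      funext j; exact hdiff _ (hs j) _ htm'
    rw [h2, hdiff _ hS _ htm']
    exact ENNReal.Tendsto.sub huniv iht (Or.inl (measure_ne_top κ _))
  · intro g hdisj hgm ihg
    have hgm' : ∀ i, MeasurableSet (g i) := fun i => h𝒜 _ (hgm i)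
    have hrw : ∀ (T : Set γ), MeasurableSet T →
        κ (T ∩ ⋃ i, g i) = ∫⁻ i, κ (T ∩ g i) ∂Measure.count := by
      intro T hT
      rw [inter_iUnion, lintegral_count]
      exact measure_iUnion
        (fun i j hij => ((hdisj hij).mono inter_subset_right inter_subset_right))
        (fun i => hT.inter (hgm' i))
    have key : Tendsto (fun j => ∫⁻ i, κ (s j ∩ g i) ∂Measure.count) atTop
        (𝓝 (∫⁻ i, κ (S ∩ g i) ∂Measure.count)) := by
      refine tendsto_lintegral_of_dominated_convergence (fun i => κ (g i)) ?_ ?_ ?_ ?_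
      · exact fun j => measurable_from_top
      · exact fun j => Filter.Eventually.of_forall fun i =>
          measure_mono inter_subset_right
      · rw [lintegral_count]
        exact ne_of_lt (lt_of_le_of_lt
          (le_of_eq (measure_iUnion (μ := κ) hdisj hgm').symm) (measure_lt_top κ _))
      · exact Filter.Eventually.of_forall fun i => ihg i
    have h3 : ∀ j, κ (s j ∩ ⋃ i, g i) = ∫⁻ i, κ (s j ∩ g i) ∂Measure.count :=
      fun j => hrw _ (hs j)
    simp only [h3, hrw S hS]
    exact key

private lemma eapprox_spec {γ : Type*} [m : MeasurableSpace γ] (g : γ → ℝ≥0∞)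
    (hg : Measurable g) :
    ∃ s : ℕ → γ → ℝ≥0∞,
      (∀ n, Measurable (s n)) ∧ Monotone s ∧ (∀ n a, s n a ≤ g a) ∧
      (∀ n, (Set.range (s n)).Finite) ∧ (∀ n x, MeasurableSet (s n ⁻¹' {x})) ∧
      (∀ n a, s n a < ∞) ∧ (∀ a, ⨆ n, s n a = g a) := by
  refine ⟨fun n => SimpleFunc.eapprox g n, fun n => (SimpleFunc.eapprox g n).measurable,
    fun a b hab x => SimpleFunc.monotone_eapprox g hab x, fun n a => ?_,
    fun n => (SimpleFunc.eapprox g n).finite_range,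
    fun n x => (SimpleFunc.eapprox g n).measurableSet_fiber x,
    fun n a => SimpleFunc.eapprox_lt_top g n a,
    fun a => SimpleFunc.iSup_eapprox_apply hg a⟩
  exact le_of_le_of_eq (le_iSup (fun n => (SimpleFunc.eapprox g n) a) n)
    (SimpleFunc.iSup_eapprox_apply hg a)

theorem lint_conv {𝒜 : MeasurableSpace γ} [mγ : MeasurableSpace γ] (h𝒜 : 𝒜 ≤ mγ)
    (ρs : ℕ → Measure γ) (ρ nb : Measure γ) [IsFiniteMeasure nb]
    (hdom : ∀ j, ρs j ≤ nb) (hdomρ : ρ ≤ nb)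
    (hconv : ∀ B, MeasurableSet[𝒜] B → Tendsto (fun j => ρs j B) atTop (𝓝 (ρ B)))
    (g : γ → ℝ≥0∞) (hg : Measurable[𝒜] g) (hgi : ∫⁻ a, g a ∂nb ≠ ∞) :
    Tendsto (fun j => ∫⁻ a, g a ∂ρs j) atTop (𝓝 (∫⁻ a, g a ∂ρ)) := by
  classical
  obtain ⟨sn, hmeas𝒜, hsnmono, hsnle, hfinrange, hfib𝒜, hlttop, hsup⟩ :=
    @eapprox_spec γ 𝒜 g hg
  have hsnmeas : ∀ n, Measurable (sn n) := fun n => (hmeas𝒜 n).mono h𝒜 le_rfl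
  have hdecomp : ∀ n (m : Measure γ),
      ∫⁻ a, g a ∂m = ∫⁻ a, sn n a ∂m + ∫⁻ a, (g a - sn n a) ∂m := by
    intro n m
    rw [← lintegral_add_left (hsnmeas n)]
    congr 1; funext a
    exact (add_tsub_cancel_of_le (hsnle n a)).symm
  set en : ℕ → ℝ≥0∞ := fun n => ∫⁻ a, (g a - sn n a) ∂nb with hen
  have hen0 : Tendsto en atTop (𝓝 0) := by
    have hmono : Tendsto (fun n => ∫⁻ a, sn n a ∂nb) atTop (𝓝 (∫⁻ a, g a ∂nb)) := by
      have h1 : ∫⁻ a, g a ∂nb = ⨆ n, ∫⁻ a, sn n a ∂nb := by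
        rw [← lintegral_iSup hsnmeas hsnmono]
        congr 1; funext a
        exact (hsup a).symm
      rw [h1]
      exact tendsto_atTop_iSup fun m n hmn => lintegral_mono fun a => hsnmono hmn a
    have h2 : en = fun n => ∫⁻ a, g a ∂nb - ∫⁻ a, sn n a ∂nb := by
      funext n
      rw [hdecomp n nb, ENNReal.add_sub_cancel_left]
      exact ne_of_lt (lt_of_le_of_lt (lintegral_mono fun a => hsnle n a) hgi.lt_top)
    rw [h2]
    have := ENNReal.Tendsto.sub (tendsto_const_nhds (x := ∫⁻ a, g a ∂nb)) hmono (Or.inl hgi)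
    simpa using this
  have hsimple : ∀ n, Tendsto (fun j => ∫⁻ a, sn n a ∂ρs j) atTop (𝓝 (∫⁻ a, sn n a ∂ρ)) := by
    intro n
    set s' : @SimpleFunc γ mγ ℝ≥0∞ :=
      { toFun := sn n
        measurableSet_fiber' := fun x => h𝒜 _ (hfib𝒜 n x)
        finite_range' := hfinrange n } with hs'
    have hcoe : ∀ (m : Measure γ),
        ∫⁻ a, sn n a ∂m = ∑ x ∈ s'.range, x * m (⇑s' ⁻¹' {x}) := by
      intro m
      rw [show (fun a => sn n a) = ⇑s' from rfl, SimpleFunc.lintegral_eq_lintegral]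
      rfl
    simp only [hcoe]
    refine tendsto_finset_sum _ fun x hx => ?_
    refine ENNReal.Tendsto.const_mul (hconv _ ?_) ?_
    · exact hfib𝒜 n x
    · right
      obtain ⟨a, ha⟩ := SimpleFunc.mem_range.mp hx
      exact ne_of_lt (ha ▸ hlttop n a)
  have hub : ∀ n j, ∫⁻ a, g a ∂ρs j ≤ ∫⁻ a, sn n a ∂ρs j + en n := by
    intro n j
    rw [hdecomp n (ρs j)]
    exact add_le_add le_rfl (lintegral_mono' (hdom j) le_rfl)
  have hlb : ∀ n j, ∫⁻ a, sn n a ∂ρs j ≤ ∫⁻ a, g a ∂ρs j :=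
    fun n j => lintegral_mono fun a => hsnle n a
  refine tendsto_of_le_liminf_of_limsup_le ?_ ?_
  · refine ENNReal.le_of_forall_pos_le_add fun ε hε hfin => ?_
    obtain ⟨n, hn⟩ : ∃ n, en n < ε := by
      have := hen0.eventually_lt_const (show (0:ℝ≥0∞) < ε by exact_mod_cast hε)
      exact this.exists
    have h1 : ∫⁻ a, g a ∂ρ ≤ ∫⁻ a, sn n a ∂ρ + en n := by
      rw [hdecomp n ρ]
      exact add_le_add le_rfl (lintegral_mono' hdomρ le_rfl)
    refine h1.trans ?_
    have h2 : ∫⁻ a, sn n a ∂ρ ≤ liminf (fun j => ∫⁻ a, g a ∂ρs j) atTop := by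
      refine le_trans (le_of_eq (hsimple n).liminf_eq.symm) ?_
      exact liminf_le_liminf (Filter.Eventually.of_forall fun j => hlb n j)
    exact add_le_add h2 hn.le
  · refine ENNReal.le_of_forall_pos_le_add fun ε hε hfin => ?_
    obtain ⟨n, hn⟩ : ∃ n, en n < ε := by
      have := hen0.eventually_lt_const (show (0:ℝ≥0∞) < ε by exact_mod_cast hε)
      exact this.exists
    have h1 : limsup (fun j => ∫⁻ a, g a ∂ρs j) atTop ≤ ∫⁻ a, sn n a ∂ρ + en n := by
      refine le_trans (limsup_le_limsup (Filter.Eventually.of_forall fun j => hub n j)) ?_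
      have ht : Tendsto (fun j => ∫⁻ a, sn n a ∂ρs j + en n) atTop
          (𝓝 (∫⁻ a, sn n a ∂ρ + en n)) := (hsimple n).add tendsto_const_nhds
      exact le_of_eq ht.limsup_eq
    refine h1.trans ?_
    exact add_le_add (lintegral_mono fun a => hsnle n a) hn.le

end Aux

/-- **Consistency of pushforward and conditional densities** (Proposition 2.6 of
the paper): if `f` is a probability density on `Ω × Ω'`, `p : Ω → M` is measurable,
`p̄(x,y) = (p x, y)`, and the pushforward of `f d(μ×μ')` under `p̄` has density
`fp` with respect to `ν × μ'`, then for `μ'`-a.e. `y` with `0 < f_Y(y) < ∞`, the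
pushforward of the conditional density `f(·|y)` under `p` has density
`fp(·,y)/f_Y(y)` with respect to `ν`; in particular `∫ fp(z,y) dν(z) = f_Y(y)`. -/
theorem pushforward_conditional_density {Ω Ω' M : Type*}
    [MeasurableSpace Ω] [MeasurableSpace Ω'] [MeasurableSpace M]
    (μ : Measure Ω) (μ' : Measure Ω') (ν : Measure M)
    [SigmaFinite μ] [SigmaFinite μ'] [SigmaFinite ν]
    (f : Ω × Ω' → ℝ) (hf : Measurable f) (hf0 : ∀ z, 0 ≤ f z)
    (hf1 : ∫⁻ z, ENNReal.ofReal (f z) ∂(μ.prod μ') = 1)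
    (p : Ω → M) (hp : Measurable p)
    (fp : M × Ω' → ℝ) (hfp : Measurable fp) (hfp0 : ∀ w, 0 ≤ fp w)
    (hpush : ((μ.prod μ').withDensity fun z => ENNReal.ofReal (f z)).map
        (fun z : Ω × Ω' => (p z.1, z.2)) =
      (ν.prod μ').withDensity fun w => ENNReal.ofReal (fp w)) :
    ∀ᵐ y ∂μ',
      (0 < ∫⁻ x, ENNReal.ofReal (f (x, y)) ∂μ ∧
        ∫⁻ x, ENNReal.ofReal (f (x, y)) ∂μ < ⊤) →
      ((μ.withDensity fun x => ENNReal.ofReal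
            (f (x, y) / (∫⁻ x', ENNReal.ofReal (f (x', y)) ∂μ).toReal)).map p =
        ν.withDensity fun z => ENNReal.ofReal
          (fp (z, y) / (∫⁻ x', ENNReal.ofReal (f (x', y)) ∂μ).toReal)) ∧
      ∫⁻ z, ENNReal.ofReal (fp (z, y)) ∂ν = ∫⁻ x, ENNReal.ofReal (f (x, y)) ∂μ := by
  classical
  set F1 : Ω × Ω' → ℝ≥0∞ := fun z => ENNReal.ofReal (f z) with hF1def
  set FP : M × Ω' → ℝ≥0∞ := fun w => ENNReal.ofReal (fp w) with hFPdef
  have hF1m : Measurable F1 := ENNReal.measurable_ofReal.comp hf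
  have hFPm : Measurable FP := ENNReal.measurable_ofReal.comp hfp
  set G : Ω' → ℝ≥0∞ := fun y => ∫⁻ x, F1 (x, y) ∂μ with hGdef
  have hGm : Measurable G := hF1m.lintegral_prod_left'
  set F : Ω → ℝ≥0∞ := fun x => ∫⁻ y, F1 (x, y) ∂μ' with hFdef
  have hFm : Measurable F := hF1m.lintegral_prod_right'
  have hFint : ∫⁻ x, F x ∂μ = 1 := by
    rw [hFdef, ← lintegral_prod _ hF1m.aemeasurable]
    exact hf1
  have hFae : ∀ᵐ x ∂μ, F x < ∞ := ae_lt_top hFm (by rw [hFint]; exact one_ne_top)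
  set μf : Measure Ω := μ.withDensity F with hμf
  haveI : IsFiniteMeasure μf := by
    constructor
    rw [hμf, withDensity_apply _ MeasurableSet.univ, setLIntegral_univ, hFint]
    exact one_lt_top
  set V : Set Ω := {x | F x = 0} with hVdef
  have hV : MeasurableSet V := hFm (measurableSet_singleton 0)
  -- the map p̄
  set pbar : Ω × Ω' → M × Ω' := fun z => (p z.1, z.2) with hpbar
  have hpbarm : Measurable pbar := (hp.comp measurable_fst).prodMk measurable_snd
  -- fact N1
  have haeV : ∀ᵐ y ∂μ', ∫⁻ x in V, F1 (x, y) ∂μ = 0 := by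
    have hswap : ∫⁻ y, (∫⁻ x in V, F1 (x, y) ∂μ) ∂μ' = ∫⁻ x in V, F x ∂μ := by
      rw [hFdef]
      exact (lintegral_lintegral_swap (hF1m.aemeasurable)).symm
    have hzero : ∫⁻ x in V, F x ∂μ = 0 := by
      have : ∀ x ∈ V, F x = (fun _ => (0:ℝ≥0∞)) x := fun x hx => hx
      rw [setLIntegral_congr_fun hV (fun x hx => this x hx), lintegral_zero]
    refine (lintegral_eq_zero_iff ?_).mp (hswap.trans hzero)
    exact hF1m.lintegral_prod_left'
  -- fact A : for a fixed measurable set, sections agree a.e.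
  have factA : ∀ A : Set M, MeasurableSet A → ∀ᵐ y ∂μ',
      ∫⁻ x in p ⁻¹' A, F1 (x, y) ∂μ = ∫⁻ z in A, FP (z, y) ∂ν := by
    intro A hA
    have hmeas1 : Measurable fun y => ∫⁻ x in p ⁻¹' A, F1 (x, y) ∂μ :=
      hF1m.lintegral_prod_left'
    have hmeas2 : Measurable fun y => ∫⁻ z in A, FP (z, y) ∂ν :=
      hFPm.lintegral_prod_left'
    refine ae_eq_of_forall_setLIntegral_eq_of_sigmaFinite hmeas1 hmeas2 fun B hB _ => ?_
    have hL : ((μ.prod μ').withDensity F1).map pbar (A ×ˢ B) =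
        ∫⁻ y in B, (∫⁻ x in p ⁻¹' A, F1 (x, y) ∂μ) ∂μ' := by
      rw [Measure.map_apply hpbarm (hA.prod hB), withDensity_apply _
        (hpbarm (hA.prod hB))]
      have hpre : pbar ⁻¹' (A ×ˢ B) = (p ⁻¹' A) ×ˢ B := by
        ext z; simp [hpbar, Set.mem_prod]
      rw [hpre, ← Measure.prod_restrict, lintegral_prod_symm _ hF1m.aemeasurable]
    have hR : (ν.prod μ').withDensity FP (A ×ˢ B) =
        ∫⁻ y in B, (∫⁻ z in A, FP (z, y) ∂ν) ∂μ' := by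
      rw [withDensity_apply _ (hA.prod hB), ← Measure.prod_restrict,
        lintegral_prod_symm _ hFPm.aemeasurable]
    rw [← hL, ← hR, hpush]
  -- countably generated sub-σ-algebras
  obtain ⟨bΩ, hbΩc, hbΩle, hfΩ⟩ := exists_ctblyGen_prod_measurable f hf
  obtain ⟨bM0, hbM0c, hbM0le, hfpM⟩ := exists_ctblyGen_prod_measurable fp hfp
  set bM : Set (Set M) := bM0 ∪ Set.range (spanningSets ν) with hbMdef
  have hbMc : bM.Countable := hbM0c.union (countable_range _)
  have hbMle : MeasurableSpace.generateFrom bM ≤ ‹MeasurableSpace M› := by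
    refine MeasurableSpace.generateFrom_le fun t ht => ?_
    rcases ht with ht | ⟨k, rfl⟩
    · exact hbM0le _ (measurableSet_generateFrom ht)
    · exact measurableSet_spanningSets ν k
  have hF1A : @Measurable _ _
      ((MeasurableSpace.generateFrom bΩ).prod ‹MeasurableSpace Ω'›) _ F1 :=
    ENNReal.measurable_ofReal.comp hfΩ
  have hFPC : @Measurable _ _
      ((MeasurableSpace.generateFrom bM).prod ‹MeasurableSpace Ω'›) _ FP := by
    have h1 : @Measurable _ _
        ((MeasurableSpace.generateFrom bM0).prod ‹MeasurableSpace Ω'›) _ FP :=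
      ENNReal.measurable_ofReal.comp hfpM
    exact h1.mono (prod_mono_left _ (MeasurableSpace.generateFrom_mono subset_union_left)) le_rfl
  -- F is measurable w.r.t. generateFrom bΩ
  have hFA : Measurable[MeasurableSpace.generateFrom bΩ] F := by
    letI : MeasurableSpace Ω := MeasurableSpace.generateFrom bΩ
    exact Measurable.lintegral_prod_right' hF1A
  -- the weight function ψ on M
  set c : ℕ → ℝ≥0∞ := fun k => ((2:ℝ≥0∞)^k)⁻¹ * (ν (spanningSets ν k) + 1)⁻¹ with hcdef
  have hcle : ∀ k, c k ≤ ((2:ℝ≥0∞)⁻¹)^k := by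
    intro k
    rw [hcdef, ← ENNReal.inv_pow]
    exact mul_le_of_le_of_le_one le_rfl (ENNReal.inv_le_one.mpr (le_add_self))
  have hcpos : ∀ k, 0 < c k := by
    intro k
    refine ENNReal.mul_pos ?_ ?_
    · exact (ENNReal.inv_pos.mpr (ENNReal.pow_ne_top (by norm_num))).ne'
    · exact (ENNReal.inv_pos.mpr (ENNReal.add_ne_top.mpr
        ⟨(measure_spanningSets_lt_top ν k).ne, one_ne_top⟩)).ne'
  set ψ : M → ℝ≥0∞ := fun z => ∑' k, (spanningSets ν k).indicator (fun _ => c k) z with hψdef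
  have hψC : Measurable[MeasurableSpace.generateFrom bM] ψ := by
    refine Measurable.ennreal_tsum fun k => ?_
    refine Measurable.indicator measurable_const ?_
    exact measurableSet_generateFrom (Or.inr (mem_range_self k))
  have hψm : Measurable ψ := hψC.mono hbMle le_rfl
  have hψle : ∀ z, ψ z ≤ 2 := by
    intro z
    calc ψ z ≤ ∑' k, ((2:ℝ≥0∞)⁻¹)^k := by
          refine ENNReal.tsum_le_tsum fun k => ?_
          exact le_trans (Set.indicator_le_self' (fun _ _ => zero_le) z) (hcle k)
    _ = 2 := by
          rw [ENNReal.tsum_geometric, ENNReal.one_sub_inv_two, inv_inv]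
  have hψtop : ∀ z, ψ z ≠ ∞ := fun z => (lt_of_le_of_lt (hψle z) (by norm_num)).ne
  have hψpos : ∀ z, ψ z ≠ 0 := by
    intro z
    obtain ⟨k, hk⟩ : ∃ k, z ∈ spanningSets ν k := by
      have := iUnion_spanningSets ν
      exact mem_iUnion.mp (this ▸ mem_univ z)
    have h1 : c k ≤ ψ z := by
      have : (spanningSets ν k).indicator (fun _ => c k) z = c k := by
        simp [Set.indicator_of_mem hk]
      exact this ▸ ENNReal.le_tsum k
    exact fun h0 => ((hcpos k).trans_le h1).ne' h0
  have hψint : ∫⁻ z, ψ z ∂ν ≤ 2 := by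
    rw [hψdef, lintegral_tsum fun k => (measurable_const.indicator
      (measurableSet_spanningSets ν k)).aemeasurable]
    calc ∑' k, ∫⁻ z, (spanningSets ν k).indicator (fun _ => c k) z ∂ν
        ≤ ∑' k, ((2:ℝ≥0∞)⁻¹)^k := by
          refine ENNReal.tsum_le_tsum fun k => ?_
          rw [lintegral_indicator (measurableSet_spanningSets ν k) _, setLIntegral_const]
          rw [hcdef, ← ENNReal.inv_pow, mul_assoc]
          refine mul_le_of_le_of_le_one le_rfl ?_
          calc (ν (spanningSets ν k) + 1)⁻¹ * ν (spanningSets ν k)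
              ≤ (ν (spanningSets ν k) + 1)⁻¹ * (ν (spanningSets ν k) + 1) :=
                mul_le_mul_right le_self_add _
          _ = 1 := ENNReal.inv_mul_cancel (by simp) (ENNReal.add_ne_top.mpr
                ⟨(measure_spanningSets_lt_top ν k).ne, one_ne_top⟩)
    _ = 2 := by rw [ENNReal.tsum_geometric, ENNReal.one_sub_inv_two, inv_inv]
  set ν'' : Measure M := ν.withDensity ψ with hν''
  haveI : IsFiniteMeasure ν'' := by
    constructor
    rw [hν'', withDensity_apply _ MeasurableSet.univ, setLIntegral_univ]
    exact lt_of_le_of_lt hψint (by norm_num)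
  -- enumerations of generators (π-systems indexed by finsets)
  obtain ⟨eΩ, heΩ⟩ := (hbΩc.insert univ).exists_eq_range (insert_nonempty _ _)
  obtain ⟨eM, heM⟩ := (hbMc.insert univ).exists_eq_range (insert_nonempty _ _)
  have hgenΩ : MeasurableSpace.generateFrom bΩ =
      MeasurableSpace.generateFrom (Set.range fun t : Finset ℕ => ⋂ i ∈ t, eΩ i) :=
    generateFrom_eq_piSystem bΩ eΩ heΩ
  have hgenM : MeasurableSpace.generateFrom bM =
      MeasurableSpace.generateFrom (Set.range fun t : Finset ℕ => ⋂ i ∈ t, eM i) :=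
    generateFrom_eq_piSystem bM eM heM
  -- the coordinate map and a countable dense family of measurable sets
  set Θ : {A : Set M // MeasurableSet A} → (Finset ℕ → ℝ≥0∞ × ℝ≥0∞) := fun A t =>
    (μf ((p ⁻¹' A.1) ∩ ⋂ i ∈ t, eΩ i), ν'' (A.1 ∩ ⋂ i ∈ t, eM i)) with hΘdef
  obtain ⟨D, hDc, hDdense⟩ := TopologicalSpace.exists_countable_dense (↥(Set.range Θ))
  have hΨex : ∀ r : ↥(Set.range Θ), ∃ A : {A : Set M // MeasurableSet A}, Θ A = r.1 :=
    fun r => r.2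
  set Ψ : ↥(Set.range Θ) → {A : Set M // MeasurableSet A} :=
    fun r => Classical.choose (hΨex r) with hΨdef
  have hΨ : ∀ r, Θ (Ψ r) = r.1 := fun r => Classical.choose_spec (hΨex r)
  -- the almost-everywhere facts
  have haeD : ∀ᵐ y ∂μ', ∀ r ∈ D, ∫⁻ x in p ⁻¹' (Ψ r).1, F1 (x, y) ∂μ
      = ∫⁻ z in (Ψ r).1, FP (z, y) ∂ν :=
    (ae_ball_iff hDc).mpr fun r _ => factA (Ψ r).1 (Ψ r).2
  have haeU : ∀ᵐ y ∂μ', ∫⁻ x, F1 (x, y) ∂μ = ∫⁻ z, FP (z, y) ∂ν := by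
    filter_upwards [factA univ MeasurableSet.univ] with y hy
    simpa using hy
  filter_upwards [haeV, haeD, haeU] with y hyV hyD hyU
  rintro ⟨hpos, hfin⟩
  -- section densities
  set wy : Ω → ℝ≥0∞ := fun x => F1 (x, y) / F x with hwydef
  set uy : M → ℝ≥0∞ := fun z => FP (z, y) / ψ z with huydef
  have hwyA : Measurable[MeasurableSpace.generateFrom bΩ] wy := by
    letI : MeasurableSpace Ω := MeasurableSpace.generateFrom bΩ
    exact (hF1A.comp measurable_prodMk_right).div hFA
  have hwym : Measurable wy := hwyA.mono hbΩle le_rfl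
  have huyC : Measurable[MeasurableSpace.generateFrom bM] uy := by
    letI : MeasurableSpace M := MeasurableSpace.generateFrom bM
    exact (hFPC.comp measurable_prodMk_right).div hψC
  have huym : Measurable uy := huyC.mono hbMle le_rfl
  -- a.e. identity F1 (x,y) = F x * wy x
  have haeF1 : ∀ᵐ x ∂μ, F1 (x, y) = F x * wy x := by
    have h0 : ∀ᵐ x ∂μ, x ∈ V → F1 (x, y) = 0 := by
      have h1 : (fun x => F1 (x, y)) =ᵐ[μ.restrict V] 0 :=
        (lintegral_eq_zero_iff (hF1m.comp measurable_prodMk_right)).mp hyV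
      exact (ae_restrict_iff' hV).mp h1
    filter_upwards [h0, hFae] with x hx0 hxtop
    by_cases hFx : F x = 0
    · rw [hx0 hFx, hFx, zero_mul]
    · rw [hwydef]
      exact (ENNReal.mul_div_cancel hFx hxtop.ne).symm
  -- representation lemmas
  have reprΩ : ∀ S : Set Ω, MeasurableSet S →
      ∫⁻ x in S, F1 (x, y) ∂μ = ∫⁻ x, wy x ∂(μf.restrict S) := by
    intro S hS
    rw [hμf, restrict_withDensity hS, lintegral_withDensity_eq_lintegral_mul _ hFm hwym]
    exact lintegral_congr_ae (ae_restrict_of_ae (haeF1.mono fun x hx => by simpa using hx))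
  have reprM : ∀ A : Set M, MeasurableSet A →
      ∫⁻ z in A, FP (z, y) ∂ν = ∫⁻ z, uy z ∂(ν''.restrict A) := by
    intro A hA
    rw [hν'', restrict_withDensity hA, lintegral_withDensity_eq_lintegral_mul _ hψm huym]
    refine lintegral_congr fun z => ?_
    exact (ENNReal.mul_div_cancel (hψpos z) (hψtop z)).symm
  -- finiteness of the full integrals
  have hwyint : ∫⁻ x, wy x ∂μf ≠ ∞ := by
    have h2 := reprΩ univ MeasurableSet.univ
    rw [Measure.restrict_univ, Measure.restrict_univ] at h2
    rw [← h2]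
    exact hfin.ne
  have huyint : ∫⁻ z, uy z ∂ν'' ≠ ∞ := by
    have h2 := reprM univ MeasurableSet.univ
    rw [Measure.restrict_univ, Measure.restrict_univ] at h2
    rw [← h2, ← hyU]
    exact hfin.ne
  -- the core identity, for every measurable set
  have CORE : ∀ A : Set M, MeasurableSet A →
      ∫⁻ x in p ⁻¹' A, F1 (x, y) ∂μ = ∫⁻ z in A, FP (z, y) ∂ν := by
    intro A hA
    have hmem : (⟨Θ ⟨A, hA⟩, Set.mem_range_self _⟩ : ↥(Set.range Θ)) ∈ closure D :=
      hDdense _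
    obtain ⟨xseq, hxD, hxlim⟩ := mem_closure_iff_seq_limit.mp hmem
    have hAsm : ∀ j, MeasurableSet (Ψ (xseq j)).1 := fun j => (Ψ (xseq j)).2
    have hcoord : ∀ t : Finset ℕ,
        Tendsto (fun j => Θ (Ψ (xseq j)) t) atTop (𝓝 (Θ ⟨A, hA⟩ t)) := by
      intro t
      have hco : Continuous fun r : ↥(Set.range Θ) => r.1 t :=
        (continuous_apply t).comp continuous_subtype_val
      have h3 := (hco.tendsto _).comp hxlim
      have h4 : (fun j => (xseq j).1 t) = fun j => Θ (Ψ (xseq j)) t := by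
        funext j; rw [hΨ]
      rw [← h4]
      exact h3
    have hconvΩpi : ∀ t : Finset ℕ,
        Tendsto (fun j => μf ((p ⁻¹' (Ψ (xseq j)).1) ∩ ⋂ i ∈ t, eΩ i)) atTop
          (𝓝 (μf ((p ⁻¹' A) ∩ ⋂ i ∈ t, eΩ i))) := by
      intro t
      have h5 := (continuous_fst.tendsto _).comp (hcoord t)
      simpa [hΘdef, Function.comp_def] using h5
    have hconvMpi : ∀ t : Finset ℕ,
        Tendsto (fun j => ν'' ((Ψ (xseq j)).1 ∩ ⋂ i ∈ t, eM i)) atTop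
          (𝓝 (ν'' (A ∩ ⋂ i ∈ t, eM i))) := by
      intro t
      have h5 := (continuous_snd.tendsto _).comp (hcoord t)
      simpa [hΘdef, Function.comp_def] using h5
    have hconvΩ := set_conv hbΩle eΩ hgenΩ μf (fun j => p ⁻¹' (Ψ (xseq j)).1) (p ⁻¹' A)
      (fun j => hp (hAsm j)) (hp hA) hconvΩpi
    have hconvM := set_conv hbMle eM hgenM ν'' (fun j => (Ψ (xseq j)).1) A hAsm hA hconvMpi
    have hρconvΩ : ∀ B, MeasurableSet[MeasurableSpace.generateFrom bΩ] B →
        Tendsto (fun j => (μf.restrict (p ⁻¹' (Ψ (xseq j)).1)) B) atTop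
          (𝓝 ((μf.restrict (p ⁻¹' A)) B)) := by
      intro B hB
      have hBm : MeasurableSet B := hbΩle _ hB
      simpa [Measure.restrict_apply hBm, Set.inter_comm B] using hconvΩ B hB
    have hρconvM : ∀ B, MeasurableSet[MeasurableSpace.generateFrom bM] B →
        Tendsto (fun j => (ν''.restrict ((Ψ (xseq j)).1)) B) atTop
          (𝓝 ((ν''.restrict A) B)) := by
      intro B hB
      have hBm : MeasurableSet B := hbMle _ hB
      simpa [Measure.restrict_apply hBm, Set.inter_comm B] using hconvM B hB
    have hlintΩ := lint_conv hbΩle (fun j => μf.restrict (p ⁻¹' (Ψ (xseq j)).1))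
      (μf.restrict (p ⁻¹' A)) μf (fun j => Measure.restrict_le_self)
      Measure.restrict_le_self hρconvΩ wy hwyA hwyint
    have hlintM := lint_conv hbMle (fun j => ν''.restrict ((Ψ (xseq j)).1))
      (ν''.restrict A) ν'' (fun j => Measure.restrict_le_self)
      Measure.restrict_le_self hρconvM uy huyC huyint
    have hterm : (fun j => ∫⁻ x, wy x ∂(μf.restrict (p ⁻¹' (Ψ (xseq j)).1)))
        = fun j => ∫⁻ z, uy z ∂(ν''.restrict ((Ψ (xseq j)).1)) := by
      funext j
      rw [← reprΩ _ (hp (hAsm j)), ← reprM _ (hAsm j)]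
      exact hyD (xseq j) (hxD j)
    rw [hterm] at hlintΩ
    have hlimeq := tendsto_nhds_unique hlintΩ hlintM
    rw [reprΩ _ (hp hA), reprM _ hA, hlimeq]
  -- conclusions
  constructor
  · have hGne : (∫⁻ x, F1 (x, y) ∂μ) ≠ 0 := hpos.ne'
    have hGtop : (∫⁻ x, F1 (x, y) ∂μ) ≠ ⊤ := hfin.ne
    have htoReal : ENNReal.ofReal ((∫⁻ x, F1 (x, y) ∂μ).toReal) = ∫⁻ x, F1 (x, y) ∂μ :=
      ofReal_toReal hGtop
    have hdens1 : ∀ x : Ω, ENNReal.ofReal (f (x, y) / (∫⁻ x', F1 (x', y) ∂μ).toReal)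
        = F1 (x, y) * (∫⁻ x', F1 (x', y) ∂μ)⁻¹ := by
      intro x
      rw [ENNReal.ofReal_div_of_pos (ENNReal.toReal_pos hGne hGtop), htoReal,
        div_eq_mul_inv]
    have hdens2 : ∀ z : M, ENNReal.ofReal (fp (z, y) / (∫⁻ x', F1 (x', y) ∂μ).toReal)
        = FP (z, y) * (∫⁻ x', F1 (x', y) ∂μ)⁻¹ := by
      intro z
      rw [ENNReal.ofReal_div_of_pos (ENNReal.toReal_pos hGne hGtop), htoReal,
        div_eq_mul_inv]
    have hF1y : Measurable fun x : Ω => F1 (x, y) := hF1m.comp measurable_prodMk_right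
    have hFPy : Measurable fun z : M => FP (z, y) := hFPm.comp measurable_prodMk_right
    refine Measure.ext fun A hA => ?_
    rw [Measure.map_apply hp hA, withDensity_apply _ (hp hA), withDensity_apply _ hA]
    change ∫⁻ a in p ⁻¹' A, ENNReal.ofReal (f (a, y) / (∫⁻ x', F1 (x', y) ∂μ).toReal) ∂μ =
      ∫⁻ a in A, ENNReal.ofReal (fp (a, y) / (∫⁻ x', F1 (x', y) ∂μ).toReal) ∂ν
    simp only [hdens1, hdens2]
    rw [lintegral_mul_const _ hF1y, lintegral_mul_const _ hFPy, CORE A hA]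
  · exact hyU.symm
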